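/- Suppose X ⊆ 2^ω satisfies S_1(Ω,Γ): for any sequence ⟨U_n : n < ω⟩ of ω-covers of X one can choose C_n ∈ U_n so that ⟨C_n⟩ is a γ-cover of X. Then player C has no winning strategy in the game G^γ_{F,C}(X). -/

import Mathlib

open Filter Set

def IsOmegaCover {α : Type*} [TopologicalSpace α] (X : Set α) (U : Set (Set α)) : Prop :=
  U.Countable ∧ (∀ u ∈ U, IsOpen u) ∧ ∀ F : Set α, F ⊆ X → F.Finite → ∃ u ∈ U, F ⊆ u

def IsGammaCover {α : Type*} [TopologicalSpace α] (X : Set α) (V : ℕ → Set α) : Prop :=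
  (∀ n, IsOpen (V n)) ∧ ∀ x ∈ X, ∀ᶠ n in atTop, x ∈ V n

/-- The selection principle `S₁(Ω,Γ)`. -/
def S1OmegaGamma (X : Set (ℕ → Bool)) : Prop :=
  ∀ U : ℕ → Set (Set (ℕ → Bool)), (∀ n, IsOmegaCover X (U n)) →
    ∃ V : ℕ → Set (ℕ → Bool), (∀ n, V n ∈ U n) ∧ IsGammaCover X V

def playC (σ : List (Set (ℕ → Bool)) → Set (ℕ → Bool)) (F : ℕ → Set (ℕ → Bool))
    (n : ℕ) : Set (ℕ → Bool) :=
  σ ((List.range (n + 1)).map F)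

def WinningForC (X : Set (ℕ → Bool)) (σ : List (Set (ℕ → Bool)) → Set (ℕ → Bool)) : Prop :=
  ∀ F : ℕ → Set (ℕ → Bool), (∀ n, (F n).Finite ∧ F n ⊆ X) →
    (∀ n, IsClopen (playC σ F n) ∧ F n ⊆ playC σ F n) ∧
    ¬ IsGammaCover X (playC σ F)

/-! ### Auxiliary definitions -/

open TopologicalSpace in
lemma clopen_countable : {s : Set (ℕ → Bool) | IsClopen s}.Countable := by
  have h : Countable (Clopens (ℕ → Bool)) :=
    Clopens.countable_iff_secondCountable.mpr inferInstance
  have he : {s : Set (ℕ → Bool) | IsClopen s}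
      = Set.range (fun c : Clopens (ℕ → Bool) => (c : Set (ℕ → Bool))) := by
    ext s
    constructor
    · intro hs; exact ⟨⟨s, hs⟩, rfl⟩
    · rintro ⟨c, rfl⟩; exact c.2
  rw [he]
  exact Set.countable_range _

/-- Positions of player F determined by a witness function and a list of indices
(most recent move first). -/
def posAux (wit : List (Set (ℕ → Bool)) → ℕ → Set (ℕ → Bool)) :
    List ℕ → List (Set (ℕ → Bool))
  | [] => []
  | k :: s => posAux wit s ++ [wit (posAux wit s) k]

/-- The branch through the tree determined by a choice of child at each node. -/
def branchAux (g : List ℕ → ℕ) : ℕ → List ℕ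
  | 0 => []
  | n + 1 => g (branchAux g n) :: branchAux g n

theorem S1_implies_C_has_no_winning_strategy
    (X : Set (ℕ → Bool)) (hX : S1OmegaGamma X) :
    ¬ ∃ σ : List (Set (ℕ → Bool)) → Set (ℕ → Bool), WinningForC X σ := by
  classical
  rintro ⟨σ, hσ⟩
  -- valid lists of moves for F
  set Valid : List (Set (ℕ → Bool)) → Prop := fun L => ∀ s ∈ L, s.Finite ∧ s ⊆ X with hValid
  -- extend a finite list of moves to an infinite sequence of moves
  set extF : List (Set (ℕ → Bool)) → ℕ → Set (ℕ → Bool) :=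
    fun L k => if h : k < L.length then L.get ⟨k, h⟩ else ∅ with hextF
  have hmap : ∀ L : List (Set (ℕ → Bool)), (List.range L.length).map (extF L) = L := by
    intro L
    apply List.ext_getElem
    · simp
    · intro i h1 h2
      simp only [List.getElem_map, List.getElem_range, hextF]
      rw [dif_pos h2]
      simp
  -- the response of the strategy to any valid position is clopen and contains the last move
  have resp : ∀ (p : List (Set (ℕ → Bool))) (G : Set (ℕ → Bool)), Valid p →
      G.Finite → G ⊆ X → IsClopen (σ (p ++ [G])) ∧ G ⊆ σ (p ++ [G]) := by
    intro p G hp hGf hGX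
    have hv : ∀ n, ((extF (p ++ [G])) n).Finite ∧ extF (p ++ [G]) n ⊆ X := by
      intro n
      by_cases h : n < (p ++ [G]).length
      · simp only [hextF]
        rw [dif_pos h]
        have hmem := (p ++ [G]).get_mem ⟨n, h⟩
        rcases List.mem_append.1 hmem with h1 | h2
        · exact hp _ h1
        · rw [List.mem_singleton.1 h2]
          exact ⟨hGf, hGX⟩
      · simp only [hextF]
        rw [dif_neg h]
        exact ⟨finite_empty, empty_subset X⟩
    have hkey := (hσ (extF (p ++ [G])) hv).1 p.length
    have hplay : playC σ (extF (p ++ [G])) p.length = σ (p ++ [G]) := by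
      show σ _ = σ _
      have hlen : (p ++ [G]).length = p.length + 1 := by simp
      rw [← hlen, hmap (p ++ [G])]
    have hlast : extF (p ++ [G]) p.length = G := by
      simp only [hextF]
      have h : p.length < (p ++ [G]).length := by simp
      rw [dif_pos h]
      simp
    rw [hplay, hlast] at hkey
    exact hkey
  -- the set of possible responses at a position
  set U : List (Set (ℕ → Bool)) → Set (Set (ℕ → Bool)) :=
    fun p => {c | ∃ G : Set (ℕ → Bool), G.Finite ∧ G ⊆ X ∧ c = σ (p ++ [G])} with hU
  have hUomega : ∀ p, Valid p → IsOmegaCover X (U p) := by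
    intro p hp
    refine ⟨?_, ?_, ?_⟩
    · apply clopen_countable.mono
      rintro c ⟨G, hGf, hGX, rfl⟩
      exact (resp p G hp hGf hGX).1
    · rintro c ⟨G, hGf, hGX, rfl⟩
      exact (resp p G hp hGf hGX).1.isOpen
    · intro G hGX hGf
      exact ⟨σ (p ++ [G]), ⟨G, hGf, hGX, rfl⟩, (resp p G hp hGf hGX).2⟩
  have hUne : ∀ p, (U p).Nonempty :=
    fun p => ⟨σ (p ++ [∅]), ∅, finite_empty, empty_subset X, rfl⟩
  -- an enumeration of the possible responses at each (valid) position
  have henum : ∀ p : List (Set (ℕ → Bool)),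
      ∃ e : ℕ → Set (ℕ → Bool), Valid p → U p = Set.range e := by
    intro p
    by_cases h : Valid p
    · obtain ⟨e, he⟩ := (hUomega p h).1.exists_eq_range (hUne p)
      exact ⟨e, fun _ => he⟩
    · exact ⟨fun _ => ∅, fun h' => absurd h' h⟩
  choose e he using henum
  -- witnessing moves of F producing each enumerated response
  have hwitex : ∀ (p : List (Set (ℕ → Bool))) (k : ℕ),
      ∃ G : Set (ℕ → Bool), (G.Finite ∧ G ⊆ X) ∧ (Valid p → σ (p ++ [G]) = e p k) := by
    intro p k
    by_cases h : Valid p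
    · have hmem : e p k ∈ U p := by
        rw [he p h]; exact ⟨k, rfl⟩
      obtain ⟨G, hGf, hGX, hG⟩ := hmem
      exact ⟨G, ⟨hGf, hGX⟩, fun _ => hG.symm⟩
    · exact ⟨∅, ⟨finite_empty, empty_subset X⟩, fun h' => absurd h' h⟩
  choose wit hwit_mem hwit_eq using hwitex
  -- the positions along the tree are valid
  have hValidPos : ∀ s : List ℕ, Valid (posAux wit s) := by
    intro s
    induction s with
    | nil => intro x hx; simp [posAux] at hx
    | cons k s ih =>
      intro x hx
      rw [posAux, List.mem_append] at hx
      rcases hx with hx | hx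
      · exact ih x hx
      · rw [List.mem_singleton.1 hx]
        exact hwit_mem _ _
  -- apply S₁(Ω,Γ) to the covers indexed by nodes of the tree
  obtain ⟨V, hVmem, hVγ⟩ := hX (fun n => U (posAux wit ((Denumerable.eqv (List ℕ)).symm n)))
    (fun n => hUomega _ (hValidPos _))
  -- select the child corresponding to the chosen element of each cover
  have hsel : ∀ s : List ℕ, ∃ k, e (posAux wit s) k = V (Denumerable.eqv (List ℕ) s) := by
    intro s
    have hmem := hVmem (Denumerable.eqv (List ℕ) s)
    rw [Equiv.symm_apply_apply] at hmem
    rw [he _ (hValidPos s)] at hmem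
    exact hmem
  choose g hg using hsel
  -- the play of F along the branch
  set Fp : ℕ → Set (ℕ → Bool) :=
    fun n => wit (posAux wit (branchAux g n)) (g (branchAux g n)) with hFp
  have hFvalid : ∀ n, (Fp n).Finite ∧ Fp n ⊆ X := fun n => hwit_mem _ _
  have hpos_t : ∀ n, posAux wit (branchAux g (n + 1)) = posAux wit (branchAux g n) ++ [Fp n] :=
    fun n => rfl
  have hmapFp : ∀ n, (List.range (n + 1)).map Fp = posAux wit (branchAux g (n + 1)) := by
    intro n
    induction n with
    | zero =>
      rw [hpos_t 0]
      simp [posAux, branchAux, List.range_succ]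
    | succ n ih =>
      rw [List.range_succ, List.map_append, ih, hpos_t (n + 1)]
      simp
  have hresp : ∀ n, playC σ Fp n = V (Denumerable.eqv (List ℕ) (branchAux g n)) := by
    intro n
    show σ _ = _
    rw [hmapFp n, hpos_t n, hFp]
    rw [hwit_eq _ _ (hValidPos _)]
    exact hg _
  -- the indices along the branch are injective, hence tend to infinity
  have htlen : ∀ n, (branchAux g n).length = n := by
    intro n
    induction n with
    | zero => rfl
    | succ n ih => rw [branchAux]; simp [ih]
  have hinj : Function.Injective (fun n => Denumerable.eqv (List ℕ) (branchAux g n)) := by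
    intro a b hab
    have h1 : branchAux g a = branchAux g b := (Denumerable.eqv (List ℕ)).injective hab
    have h2 := congrArg List.length h1
    rwa [htlen, htlen] at h2
  -- the responses form a γ-cover, contradiction
  have hγ : IsGammaCover X (playC σ Fp) := by
    constructor
    · intro n
      exact ((hσ Fp hFvalid).1 n).1.isOpen
    · intro x hx
      have hev := hVγ.2 x hx
      have htd := hinj.nat_tendsto_atTop
      filter_upwards [htd.eventually hev] with n hn
      rw [hresp n]
      exact hn
  exact (hσ Fp hFvalid).2 hγ
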